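/- Let K be a field of characteristic 0 with finite maximal abelian subextension K_ab/ℚ, and let p be a prime not dividing λ, the number of roots of unity in K. Then for every positive integer n, H¹(Gal(K(ζₙ)/K), μ_{p^{v_p(n)}}) = 0, where v_p is the p-adic valuation. -/

import Mathlib

set_option synthInstance.maxHeartbeats 1000000
noncomputable section

/-- The homomorphism from the Galois group `L ≃ₐ[K] L` to the automorphisms of the group of
`n`-th roots of unity of `L`. -/
def galToMulAutRoots (K L : Type*) [Field K] [Field L] [Algebra K L] (n : ℕ) :
    (L ≃ₐ[K] L) →* MulAut (rootsOfUnity n L) where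
  toFun σ := MulEquiv.restrictRootsOfUnity (σ : L ≃* L) n
  map_one' := by
    ext ζ
    rfl
  map_mul' σ τ := by
    ext ζ
    rfl

/-- The natural action of the Galois group `L ≃ₐ[K] L` on the group of `n`-th roots of
unity of `L`. -/
instance galRootsAction (K L : Type*) [Field K] [Field L] [Algebra K L] (n : ℕ) :
    MulDistribMulAction (L ≃ₐ[K] L) (rootsOfUnity n L) :=
  MulDistribMulAction.compHom _ (galToMulAutRoots K L n)

/-- The maximal abelian subextension of `K/ℚ`. -/
def maxAb (K : Type*) [Field K] [CharZero K] : IntermediateField ℚ K :=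
  ⨆ F ∈ {F : IntermediateField ℚ K |
      IsGalois ℚ ↥F ∧ ∀ σ τ : ↥F ≃ₐ[ℚ] ↥F, σ * τ = τ * σ}, F

/-- The number of roots of unity contained in a field `F`. -/
def numRootsOfUnity (F : Type*) [Field F] : ℕ :=
  Nat.card (CommGroup.torsion Fˣ)


open groupCohomology in
/-- Sah's lemma for `H¹` at the multiplicative cocycle level: if `g` is central and
`x ↦ g • x / x` is bijective, then every 1-cocycle is a 1-coboundary. -/
lemma sah_aux {G M : Type*} [Group G] [CommGroup M] [MulDistribMulAction G M]
    (g : G) (hg : ∀ σ : G, σ * g = g * σ)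
    (hbij : Function.Bijective (fun x : M => g • x / x))
    {f : G → M} (hf : IsMulCocycle₁ f) : IsMulCoboundary₁ f := by
  set φ : M →* M :=
    { toFun := fun x => g • x / x
      map_one' := by simp
      map_mul' := fun x y => by
        simp only [smul_mul']
        rw [div_mul_div_comm] } with hφ
  let T : M ≃* M := MulEquiv.ofBijective φ hbij
  have hTapp : ∀ x : M, T x = g • x / x := fun x => rfl
  have hφσ : ∀ (σ : G) (x : M), T (σ • x) = σ • T x := by
    intro σ x
    rw [hTapp, hTapp, smul_div', smul_smul, smul_smul, hg]
  have hsymm : ∀ (σ : G) (y : M), T.symm (σ • y) = σ • T.symm y := by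
    intro σ y
    apply T.injective
    rw [T.apply_symm_apply, hφσ, T.apply_symm_apply]
  refine ⟨T.symm (f g), fun σ => ?_⟩
  have h1 := hf σ g
  rw [hg, hf g σ] at h1
  have key : σ • f g / f g = T (f σ) := by
    rw [hTapp, div_eq_div_iff_mul_eq_mul]
    exact h1.symm
  rw [← hsymm, ← map_div T.symm, key, T.symm_apply_apply]

set_option synthInstance.maxHeartbeats 1000000
set_option maxHeartbeats 1000000

theorem stmt_10' (K Ω : Type) [Field K] [CharZero K] [Field Ω] [Algebra K Ω]
    [IsAlgClosed Ω] [Algebra.IsAlgebraic K Ω]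
    (p : ℕ) (hp : p.Prime) (hpl : ¬ p ∣ Nat.card (CommGroup.torsion Kˣ)) (n : ℕ) (hn : 0 < n)
    (L : IntermediateField K Ω) (hL : L = IntermediateField.adjoin K {z : Ω | z ^ n = 1})
    [MulDistribMulAction (↥L ≃ₐ[K] ↥L) (rootsOfUnity (p ^ (n.factorization p)) ↥L)]
    (hsmul : ∀ (g : ↥L ≃ₐ[K] ↥L) (x : rootsOfUnity (p ^ (n.factorization p)) ↥L),
      ((g • x : rootsOfUnity (p ^ (n.factorization p)) ↥L) : (↥L)ˣ)
        = Units.map ((g : ↥L ≃* ↥L) : ↥L →* ↥L) x) :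
    ∀ f : (↥L ≃ₐ[K] ↥L) → (rootsOfUnity (p ^ (n.factorization p)) ↥L),
      groupCohomology.IsMulCocycle₁ f → groupCohomology.IsMulCoboundary₁ f := by
  haveI : CharZero Ω := charZero_of_injective_algebraMap (algebraMap K Ω).injective
  -- Case m = 0 : the module is trivial
  rcases Nat.eq_zero_or_pos (n.factorization p) with hm0 | hm0
  · intro f hf
    have hMsub : Subsingleton (rootsOfUnity (p ^ (n.factorization p)) ↥L) := by
      constructor
      rintro ⟨x, hx⟩ ⟨y, hy⟩
      rw [mem_rootsOfUnity, hm0, pow_zero, pow_one] at hx hy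
      simp [hx, hy]
    exact ⟨1, fun g => Subsingleton.elim _ _⟩
  -- Main case
  set n' : ℕ+ := ⟨n, hn⟩ with hn'
  haveI : NeZero (n' : ℕ) := ⟨hn.ne'⟩
  obtain ⟨ζ, hζ⟩ := IsCyclotomicExtension.exists_isPrimitiveRoot (S := {(n' : ℕ)}) Ω (B := Ω)
    (Set.mem_singleton _) hn.ne'
  have hζ' : IsPrimitiveRoot ζ n := hζ
  -- L is the n-th cyclotomic extension of K
  have hsub : (IntermediateField.adjoin K {z : Ω | z ^ n = 1}).toSubalgebra
      = Algebra.adjoin K ({ζ} : Set Ω) := by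
    rw [IntermediateField.adjoin_toSubalgebra_of_isAlgebraic (fun x _ => Algebra.IsAlgebraic.isAlgebraic x)]
    haveI : NeZero n := ⟨hn.ne'⟩
    apply le_antisymm
    · rw [Algebra.adjoin_le_iff]
      intro z hz
      obtain ⟨i, -, rfl⟩ := hζ'.eq_pow_of_pow_eq_one hz
      exact pow_mem (Algebra.subset_adjoin (Set.mem_singleton ζ)) i
    · rw [Algebra.adjoin_le_iff]
      intro z hz
      rw [Set.mem_singleton_iff] at hz
      subst hz
      exact Algebra.subset_adjoin (hζ'.pow_eq_one)
  haveI hcyc : IsCyclotomicExtension {(n' : ℕ)} K ↥L := by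
    haveI := hζ'.adjoin_isCyclotomicExtension K (n := (n' : ℕ))
    refine IsCyclotomicExtension.equiv {(n' : ℕ)} K _
      (Subalgebra.equivOfEq _ _ (?_ : Algebra.adjoin K ({ζ} : Set Ω) = L.toSubalgebra))
    rw [hL, hsub]
  haveI : NeZero ((n' : ℕ) : K) := ⟨Nat.cast_ne_zero.2 hn.ne'⟩
  haveI : FiniteDimensional K ↥L := IsCyclotomicExtension.finite_of_singleton (n' : ℕ) K ↥L
  haveI : IsGalois K ↥L := IsCyclotomicExtension.isGalois {(n' : ℕ)} K ↥L
  have hcomm : ∀ σ τ : ↥L ≃ₐ[K] ↥L, σ * τ = τ * σ := by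
    have hinj := (IsCyclotomicExtension.zeta_spec (n' : ℕ) K ↥L).autToPow_injective K
    intro σ τ
    apply hinj
    rw [map_mul, map_mul, mul_comm]
  have hpn : p ∣ n := Nat.dvd_of_factorization_pos hm0.ne'
  have hNn : p ^ (n.factorization p) ∣ n := Nat.ordProj_dvd n p
  -- the element of order p
  set ζL := IsCyclotomicExtension.zeta (n' : ℕ) K ↥L with hζL
  have hζLspec : IsPrimitiveRoot ζL n := IsCyclotomicExtension.zeta_spec (n' : ℕ) K ↥L
  set uζ : (↥L)ˣ := (hζLspec.isUnit hn.ne').unit with huζ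
  have huζval : (uζ : ↥L) = ζL := IsUnit.unit_spec _
  have huζn : uζ ^ n = 1 := by
    ext
    rw [Units.val_pow_eq_pow_val, huζval, hζLspec.pow_eq_one, Units.val_one]
  set c : (↥L)ˣ := uζ ^ (n / p) with hc
  have hcp : c ^ p = 1 := by
    rw [hc, ← pow_mul, Nat.div_mul_cancel hpn, huζn]
  have hcmem : c ∈ rootsOfUnity (p ^ (n.factorization p)) ↥L := by
    rw [mem_rootsOfUnity]
    obtain ⟨t, ht⟩ : p ∣ p ^ (n.factorization p) := dvd_pow_self p hm0.ne'
    rw [ht, pow_mul, hcp, one_pow]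
  set cM : rootsOfUnity (p ^ (n.factorization p)) ↥L := ⟨c, hcmem⟩ with hcM
  have hcne : c ≠ 1 := by
    intro h
    apply hζLspec.pow_ne_one_of_pos_of_lt
      (Nat.div_pos (Nat.le_of_dvd hn hpn) hp.pos).ne' (Nat.div_lt_self hn hp.one_lt)
    have := congrArg Units.val h
    rwa [hc, Units.val_pow_eq_pow_val, huζval, Units.val_one] at this
  have hcMp : cM ^ p = 1 := by
    apply Subtype.ext
    push_cast
    exact hcp
  -- there is an automorphism moving cM
  have hex : ∃ g : ↥L ≃ₐ[K] ↥L, g • cM ≠ cM := by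
    by_contra h
    push_neg at h
    have hfix : ∀ σ : ↥L ≃ₐ[K] ↥L, σ (((cM : (↥L)ˣ) : ↥L)) = ((cM : (↥L)ˣ) : ↥L) := by
      intro σ
      have h2 : ((Units.map ((σ : ↥L ≃* ↥L) : ↥L →* ↥L) (cM : (↥L)ˣ) : (↥L)ˣ) : ↥L)
          = ((cM : (↥L)ˣ) : ↥L) := by
        rw [← hsmul σ cM, h σ]
      exact h2
    have hbot : ((cM : (↥L)ˣ) : ↥L) ∈ (⊥ : IntermediateField K ↥L) := by
      have htop : IntermediateField.fixedField (⊤ : Subgroup (↥L ≃ₐ[K] ↥L)) = ⊥ :=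
        OrderIso.map_bot (IsGalois.intermediateFieldEquivSubgroup (F := K) (E := ↥L)).symm
      rw [← htop]
      intro σ
      exact hfix σ.1
    rw [IntermediateField.mem_bot] at hbot
    obtain ⟨y, hy⟩ := hbot
    have hcvp : ((cM : (↥L)ˣ) : ↥L) ^ p = 1 := by
      have h3 := congrArg Units.val hcp
      rwa [Units.val_pow_eq_pow_val, Units.val_one] at h3
    have hyp : y ^ p = 1 := by
      apply (algebraMap K ↥L).injective
      rw [map_pow, hy, map_one]
      exact hcvp
    have hyne : y ≠ 1 := by
      intro h1
      apply hcne
      apply Units.ext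
      rw [h1, map_one] at hy
      rw [← hy, Units.val_one]
    have hyy : y * y ^ (p - 1) = 1 := by
      rw [← pow_succ', Nat.sub_add_cancel hp.one_le]
      exact hyp
    set u : Kˣ := Units.mkOfMulEqOne y (y ^ (p - 1)) hyy with hu
    have huval : (u : K) = y := rfl
    have hu1 : u ^ p = 1 := by
      apply Units.ext
      rw [Units.val_pow_eq_pow_val, huval, Units.val_one]
      exact hyp
    have hune : u ≠ 1 := fun h1 => hyne (by rw [← huval, h1, Units.val_one])
    have htor : u ∈ CommGroup.torsion Kˣ := isOfFinOrder_iff_pow_eq_one.2 ⟨p, hp.pos, hu1⟩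
    have hord : orderOf u = p := by
      rcases (Nat.dvd_prime hp).1 (orderOf_dvd_of_pow_eq_one hu1) with h1 | h1
      · exact absurd (orderOf_eq_one_iff.1 h1) hune
      · exact h1
    exact hpl (hord ▸ Subgroup.orderOf_dvd_natCard _ htor)
  obtain ⟨g, hgc⟩ := hex
  haveI : NeZero (p ^ (n.factorization p)) := ⟨pow_ne_zero _ hp.pos.ne'⟩
  -- the action of g is a power map
  obtain ⟨a, ha⟩ := MonoidHom.map_cyclic
    (MulDistribMulAction.toMonoidEnd (↥L ≃ₐ[K] ↥L) (rootsOfUnity (p ^ (n.factorization p)) ↥L) g)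
  have ha' : ∀ x : rootsOfUnity (p ^ (n.factorization p)) ↥L, g • x = x ^ a := ha
  have hMpow : ∀ x : rootsOfUnity (p ^ (n.factorization p)) ↥L, x ^ (p ^ (n.factorization p)) = 1 := by
    intro x
    have hx : (x : (↥L)ˣ) ^ (p ^ (n.factorization p)) = 1 := (mem_rootsOfUnity (p ^ (n.factorization p)) (x : (↥L)ˣ)).mp x.2
    apply Subtype.ext
    push_cast
    exact hx
  have hpa : ¬ ((p : ℤ) ∣ a - 1) := by
    intro hdvd
    apply hgc
    obtain ⟨t, ht⟩ := hdvd
    have h2 : cM ^ a = cM := by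
      have h1 : cM ^ (a : ℤ) = cM ^ (1 + (a - 1)) := by ring_nf
      rw [h1, zpow_add, zpow_one, ht, zpow_mul, zpow_natCast, hcMp, one_zpow, mul_one]
    rw [ha', h2]
  have hinj : Function.Injective (fun x : rootsOfUnity (p ^ (n.factorization p)) ↥L => g • x / x) := by
    intro x y hxy
    simp only [ha'] at hxy
    have hzx : (x / y) ^ (a - 1) = 1 := by
      rw [div_zpow, zpow_sub_one, zpow_sub_one, ← div_eq_mul_inv, ← div_eq_mul_inv, hxy,
        div_self']
    by_contra hne
    have hxyne : x / y ≠ 1 := fun h => hne (div_eq_one.1 h)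
    have hord1 : orderOf (x / y) ∣ p ^ (n.factorization p) := orderOf_dvd_of_pow_eq_one (hMpow _)
    have hord2 : (orderOf (x / y) : ℤ) ∣ a - 1 := orderOf_dvd_iff_zpow_eq_one.2 hzx
    obtain ⟨j, hj, hjeq⟩ := (Nat.dvd_prime_pow hp).1 hord1
    rcases Nat.eq_zero_or_pos j with hj0 | hj0
    · rw [hj0, pow_zero, orderOf_eq_one_iff] at hjeq
      exact hxyne hjeq
    · apply hpa
      refine dvd_trans ?_ hord2
      exact_mod_cast Int.natCast_dvd_natCast.2 (hjeq ▸ dvd_pow_self p hj0.ne')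
  have hbij : Function.Bijective (fun x : rootsOfUnity (p ^ (n.factorization p)) ↥L => g • x / x) :=
    Finite.injective_iff_bijective.1 hinj
  intro f hf
  exact sah_aux g (fun σ => hcomm σ g) hbij hf


/-- Let `K` be a field of characteristic 0 with finite maximal abelian subextension
`K_ab/ℚ`, and let `p` be a prime not dividing `λ`, the number of roots of unity in `K`. Then
for every positive integer `n`, `H¹(Gal(K(ζₙ)/K), μ_{p^{v_p(n)}}) = 0`, where `v_p` is the
`p`-adic valuation. -/
theorem stmt_10 (K Ω : Type) [Field K] [CharZero K] [Field Ω] [Algebra K Ω]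
    [IsAlgClosed Ω] [Algebra.IsAlgebraic K Ω]
    (hfin : FiniteDimensional ℚ ↥(maxAb K))
    (p : ℕ) (hp : p.Prime) (hpl : ¬ p ∣ numRootsOfUnity K) (n : ℕ) (hn : 0 < n)
    (L : IntermediateField K Ω) (hL : L = IntermediateField.adjoin K {z : Ω | z ^ n = 1}) :
    Subsingleton (groupCohomology.H1
      (Rep.ofMulDistribMulAction (↥L ≃ₐ[K] ↥L)
        (rootsOfUnity (p ^ (n.factorization p)) ↥L))) := by
  have key := stmt_10' K Ω p hp hpl n hn L hL (fun g x => rfl)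
  have main : ∀ f : groupCohomology.cocycles₁
      (Rep.ofMulDistribMulAction (↥L ≃ₐ[K] ↥L) (rootsOfUnity (p ^ (n.factorization p)) ↥L)),
      f.1 ∈ groupCohomology.coboundaries₁
        (Rep.ofMulDistribMulAction (↥L ≃ₐ[K] ↥L) (rootsOfUnity (p ^ (n.factorization p)) ↥L)) := by
    intro f
    refine (groupCohomology.coboundariesOfIsMulCoboundary₁ ?_).2
    exact key _ (groupCohomology.isMulCocycle₁_of_mem_cocycles₁ _ f.2)
  have hz : ∀ a : groupCohomology.H1
      (Rep.ofMulDistribMulAction (↥L ≃ₐ[K] ↥L) (rootsOfUnity (p ^ (n.factorization p)) ↥L)),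
      a = 0 :=
    fun a => groupCohomology.H1_induction_on a fun x => (groupCohomology.H1π_eq_zero_iff _).2 (main x)
  exact ⟨fun a b => (hz a).trans (hz b).symm⟩

end
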